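/- Let A satisfy the K-condition Aᵀ𝔭A = D, let Φ = (Ā)ᵀ be the transpose of the N-th induced matrix of A, let B be the diagonal matrix of multinomial coefficients at level N, and let 𝔭̄, D̄ be the induced matrices of 𝔭 and D. Then Φ B 𝔭̄ Φᵀ = B D̄. -/

import Mathlib

open Finset Matrix

section Aux

variable {d N : ℕ}

private lemma antidiagTuple_eq_piAntidiag (d N : ℕ) :
    Finset.Nat.antidiagonalTuple (d + 1) N =
      Finset.piAntidiag (Finset.univ : Finset (Fin (d + 1))) N := by
  ext k
  simp [Finset.Nat.mem_antidiagonalTuple, Finset.mem_piAntidiag]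

private lemma elim_inj {m n m' n' : Fin (d + 1) → ℕ}
    (h : (Finsupp.equivFunOnFinite.symm (Sum.elim m n) : Sum (Fin (d+1)) (Fin (d+1)) →₀ ℕ)
        = Finsupp.equivFunOnFinite.symm (Sum.elim m' n')) : m = m' ∧ n = n' := by
  have h' : Sum.elim m n = Sum.elim m' n' := Finsupp.equivFunOnFinite.symm.injective h
  constructor
  · funext i; exact congrFun h' (Sum.inl i)
  · funext i; exact congrFun h' (Sum.inr i)

end Aux

/-- Orthogonality of the Krawtchouk matrix `Φ = (Ā)ᵀ`:
`Φ B 𝔭̄ Φᵀ = B D̄`, written entrywise, where `B` is the diagonal matrix of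
multinomial coefficients and `𝔭̄`, `D̄` are the (diagonal) induced matrices of
`𝔭` and `D` at level `N`. -/
theorem krawtchouk_matrix_orthogonality
    (d N : ℕ) (A : Matrix (Fin (d + 1)) (Fin (d + 1)) ℝ)
    (p Dd : Fin (d + 1) → ℝ)
    (hp : ∀ ℓ, 0 < p ℓ) (hpsum : ∑ ℓ, p ℓ = 1)
    (hD : ∀ ℓ, 0 < Dd ℓ) (hD0 : Dd 0 = 1)
    (hcol : ∀ ℓ, A ℓ 0 = 1)
    (hK : Aᵀ * Matrix.diagonal p * A = Matrix.diagonal Dd)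
    (Abar : (Fin (d + 1) → ℕ) → (Fin (d + 1) → ℕ) → ℝ)
    (hA : ∀ m ∈ Finset.Nat.antidiagonalTuple (d + 1) N, ∀ v : Fin (d + 1) → ℝ,
      ∏ i, (∑ j, A i j * v j) ^ m i =
        ∑ n ∈ Finset.Nat.antidiagonalTuple (d + 1) N,
          Abar m n * ∏ j, v j ^ n j) :
    ∀ m ∈ Finset.Nat.antidiagonalTuple (d + 1) N,
      ∀ n ∈ Finset.Nat.antidiagonalTuple (d + 1) N,
        ∑ k ∈ Finset.Nat.antidiagonalTuple (d + 1) N,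
            Abar k m * (Nat.multinomial Finset.univ k : ℝ) *
              (∏ j, p j ^ k j) * Abar k n =
          (if m = n then
            (Nat.multinomial Finset.univ n : ℝ) * ∏ j, Dd j ^ n j
          else 0) := by
  set T := Finset.Nat.antidiagonalTuple (d + 1) N with hT
  -- abbreviations
  set c : (Fin (d+1) → ℕ) → (Fin (d+1) → ℕ) → ℝ := fun m n =>
    ∑ k ∈ T, Abar k m * (Nat.multinomial Finset.univ k : ℝ) *
      (∏ j, p j ^ k j) * Abar k n with hc
  set b : (Fin (d+1) → ℕ) → ℝ := fun n =>
    (Nat.multinomial Finset.univ n : ℝ) * ∏ j, Dd j ^ n j with hb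
  -- the K-condition, entrywise
  have hKe : ∀ j j' : Fin (d+1), (∑ i, A i j * p i * A i j')
      = if j = j' then Dd j else 0 := by
    intro j j'
    have h := congrFun (congrFun hK j) j'
    simpa [Matrix.mul_apply, Matrix.mul_diagonal, Matrix.transpose_apply,
      Matrix.diagonal_apply] using h
  -- bilinear identity
  have hbil : ∀ v w : Fin (d+1) → ℝ,
      ∑ i, p i * ((∑ j, A i j * v j) * (∑ j, A i j * w j))
        = ∑ j, Dd j * (v j * w j) := by
    intro v w
    calc ∑ i, p i * ((∑ j, A i j * v j) * (∑ j, A i j * w j))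
        = ∑ i, ∑ j, ∑ j', (A i j * p i * A i j') * (v j * w j') := by
          refine Finset.sum_congr rfl fun i _ => ?_
          rw [Finset.sum_mul_sum, Finset.mul_sum]
          refine Finset.sum_congr rfl fun j _ => ?_
          rw [Finset.mul_sum]
          exact Finset.sum_congr rfl fun j' _ => by ring
      _ = ∑ j, ∑ j', (∑ i, A i j * p i * A i j') * (v j * w j') := by
          rw [Finset.sum_comm]
          refine Finset.sum_congr rfl fun j _ => ?_
          rw [Finset.sum_comm]
          refine Finset.sum_congr rfl fun j' _ => ?_
          rw [Finset.sum_mul]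
      _ = ∑ j, Dd j * (v j * w j) := by
          simp [hKe, ite_mul]
  -- the functional identity
  have hfun : ∀ v w : Fin (d+1) → ℝ,
      ∑ m ∈ T, ∑ n ∈ T, c m n * ((∏ j, v j ^ m j) * (∏ j, w j ^ n j))
        = ∑ n ∈ T, b n * ((∏ j, v j ^ n j) * (∏ j, w j ^ n j)) := by
    intro v w
    have swap : ∀ F : (Fin (d+1) → ℕ) → (Fin (d+1) → ℕ) → (Fin (d+1) → ℕ) → ℝ,
        ∑ m ∈ T, ∑ n ∈ T, ∑ k ∈ T, F k m n
          = ∑ k ∈ T, ∑ m ∈ T, ∑ n ∈ T, F k m n := by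
      intro F
      calc ∑ m ∈ T, ∑ n ∈ T, ∑ k ∈ T, F k m n
          = ∑ m ∈ T, ∑ k ∈ T, ∑ n ∈ T, F k m n :=
            Finset.sum_congr rfl fun m _ => Finset.sum_comm
        _ = ∑ k ∈ T, ∑ m ∈ T, ∑ n ∈ T, F k m n := Finset.sum_comm
    calc ∑ m ∈ T, ∑ n ∈ T, c m n * ((∏ j, v j ^ m j) * (∏ j, w j ^ n j))
        = ∑ m ∈ T, ∑ n ∈ T, ∑ k ∈ T,
            (Abar k m * (Nat.multinomial Finset.univ k : ℝ) *
              (∏ j, p j ^ k j) * Abar k n) *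
              ((∏ j, v j ^ m j) * (∏ j, w j ^ n j)) := by
          refine Finset.sum_congr rfl fun m _ => Finset.sum_congr rfl fun n _ => ?_
          rw [hc, Finset.sum_mul]
      _ = ∑ k ∈ T, ∑ m ∈ T, ∑ n ∈ T,
            (Abar k m * (Nat.multinomial Finset.univ k : ℝ) *
              (∏ j, p j ^ k j) * Abar k n) *
              ((∏ j, v j ^ m j) * (∏ j, w j ^ n j)) := swap _
      _ = ∑ k ∈ T, ((Nat.multinomial Finset.univ k : ℝ) * ∏ j, p j ^ k j) *
            ((∑ m ∈ T, Abar k m * ∏ j, v j ^ m j) *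
             (∑ n ∈ T, Abar k n * ∏ j, w j ^ n j)) := by
          refine Finset.sum_congr rfl fun k _ => ?_
          rw [Finset.sum_mul_sum, Finset.mul_sum]
          refine Finset.sum_congr rfl fun m _ => ?_
          rw [Finset.mul_sum]
          exact Finset.sum_congr rfl fun n _ => by ring
      _ = ∑ k ∈ T, ((Nat.multinomial Finset.univ k : ℝ) * ∏ j, p j ^ k j) *
            ((∏ i, (∑ j, A i j * v j) ^ k i) * (∏ i, (∑ j, A i j * w j) ^ k i)) := by
          refine Finset.sum_congr rfl fun k hk => ?_
          rw [hA k hk v, hA k hk w]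
      _ = ∑ k ∈ T, (Nat.multinomial Finset.univ k : ℝ) *
            ∏ i, (p i * ((∑ j, A i j * v j) * (∑ j, A i j * w j))) ^ k i := by
          refine Finset.sum_congr rfl fun k _ => ?_
          simp only [mul_pow, Finset.prod_mul_distrib]
          ring
      _ = (∑ i, p i * ((∑ j, A i j * v j) * (∑ j, A i j * w j))) ^ N := by
          rw [Finset.sum_pow_eq_sum_piAntidiag, hT, antidiagTuple_eq_piAntidiag]
      _ = (∑ j, Dd j * (v j * w j)) ^ N := by rw [hbil]
      _ = ∑ n ∈ T, b n * ((∏ j, v j ^ n j) * (∏ j, w j ^ n j)) := by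
          rw [Finset.sum_pow_eq_sum_piAntidiag, hT, antidiagTuple_eq_piAntidiag]
          refine Finset.sum_congr rfl fun n _ => ?_
          simp only [hb, mul_pow, Finset.prod_mul_distrib]
          ring
  -- polynomial extraction
  classical
  set σ := Sum (Fin (d+1)) (Fin (d+1))
  set e : (Fin (d+1) → ℕ) → (Fin (d+1) → ℕ) → (σ →₀ ℕ) := fun m n =>
    Finsupp.equivFunOnFinite.symm (Sum.elim m n) with he
  set P : MvPolynomial σ ℝ :=
    ∑ m ∈ T, ∑ n ∈ T, MvPolynomial.monomial (e m n) (c m n) with hP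
  set Q : MvPolynomial σ ℝ :=
    ∑ n ∈ T, MvPolynomial.monomial (e n n) (b n) with hQ
  have heval : ∀ (mm nn : Fin (d+1) → ℕ) (r : ℝ) (x : σ → ℝ),
      MvPolynomial.eval x (MvPolynomial.monomial (e mm nn) r)
        = r * ((∏ j, x (Sum.inl j) ^ mm j) * (∏ j, x (Sum.inr j) ^ nn j)) := by
    intro mm nn r x
    rw [MvPolynomial.eval_monomial,
      Finsupp.prod_fintype _ _ (fun s => pow_zero _), Fintype.prod_sum_type]
    simp [he]
  have hPQ : P = Q := by
    apply MvPolynomial.funext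
    intro x
    rw [hP, hQ, map_sum, map_sum]
    simp only [map_sum, heval]
    exact hfun (fun j => x (Sum.inl j)) (fun j => x (Sum.inr j))
  intro m hm n hn
  have hcoeff := congrArg (MvPolynomial.coeff (e m n)) hPQ
  rw [hP, hQ, MvPolynomial.coeff_sum] at hcoeff
  simp only [MvPolynomial.coeff_sum, MvPolynomial.coeff_monomial] at hcoeff
  -- evaluate LHS coefficient
  have hL : ∑ m' ∈ T, ∑ n' ∈ T, (if e m' n' = e m n then c m' n' else 0) = c m n := by
    rw [Finset.sum_eq_single m]
    · rw [Finset.sum_eq_single n]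
      · simp
      · intro n' _ hne
        rw [if_neg]
        exact fun h => hne (elim_inj h).2
      · intro h; exact absurd hn h
    · intro m' _ hne
      refine Finset.sum_eq_zero fun n' _ => ?_
      rw [if_neg]
      exact fun h => hne (elim_inj h).1
    · intro h; exact absurd hm h
  have hR : ∑ n' ∈ T, (if e n' n' = e m n then b n' else 0)
      = if m = n then b n else 0 := by
    by_cases hmn : m = n
    · subst hmn
      rw [if_pos rfl, Finset.sum_eq_single m]
      · simp
      · intro n' _ hne
        rw [if_neg]
        exact fun h => hne (elim_inj h).1
      · intro h; exact absurd hm h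
    · rw [if_neg hmn]
      refine Finset.sum_eq_zero fun n' _ => ?_
      rw [if_neg]
      intro h
      obtain ⟨h1, h2⟩ := elim_inj h
      exact hmn (h1 ▸ h2 ▸ rfl)
  rw [hL, hR] at hcoeff
  simpa [hc, hb] using hcoeff
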